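/- Let ℋ = ℋ₁ ⊗ ℋ₂ be a finite-dimensional bipartite complex Hilbert space and, for an operator Q on ℋ, let ‖Q‖_* := inf{‖Q − P ⊗ 1₂‖ : P an operator on ℋ₁}. If Q is positive definite (hence invertible), then ‖Q⁻¹‖_* ≤ 2 ‖Q⁻¹‖² ‖Q‖_*. -/
import Mathlib

open scoped Kronecker ComplexOrder

namespace QIT

/-- Operator norm of a matrix, i.e. the norm of the induced operator on Euclidean space. -/
noncomputable def opNorm {n : Type*} [Fintype n] [DecidableEq n] (M : Matrix n n ℂ) : ℝ :=
  ‖Matrix.toEuclideanCLM (𝕜 := ℂ) M‖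

/-- Partial trace over the second tensor factor. -/
noncomputable def ptraceRight {a c : Type*} [Fintype a] [Fintype c]
    (M : Matrix (a × c) (a × c) ℂ) : Matrix a a ℂ :=
  fun i j => ∑ k, M (i, k) (j, k)

/-- The operator-norm distance `‖Q‖_*` from `Q` to the subalgebra `B(ℋ₁) ⊗ 1₂`. -/
noncomputable def distFactor {n₁ n₂ : Type*} [Fintype n₁] [DecidableEq n₁]
    [Fintype n₂] [DecidableEq n₂] (Q : Matrix (n₁ × n₂) (n₁ × n₂) ℂ) : ℝ :=
  sInf {x : ℝ | ∃ P : Matrix n₁ n₁ ℂ, x = opNorm (Q - P ⊗ₖ (1 : Matrix n₂ n₂ ℂ))}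

/-- Conditional expectation onto `B(ℋ₁) ⊗ 1₂`: `E(Q) = ((tr₂ Q)/dim ℋ₂) ⊗ 1₂`. -/
noncomputable def condExpFactor {n₁ n₂ : Type*} [Fintype n₁] [DecidableEq n₁]
    [Fintype n₂] [DecidableEq n₂] (Q : Matrix (n₁ × n₂) (n₁ × n₂) ℂ) :
    Matrix (n₁ × n₂) (n₁ × n₂) ℂ :=
  ((Fintype.card n₂ : ℂ)⁻¹ • ptraceRight Q) ⊗ₖ (1 : Matrix n₂ n₂ ℂ)

section Aux

variable {n₁ n₂ : Type*} [Fintype n₁] [DecidableEq n₁] [Fintype n₂] [DecidableEq n₂]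

private lemma distFactor_le (M : Matrix (n₁ × n₂) (n₁ × n₂) ℂ) (P : Matrix n₁ n₁ ℂ) :
    distFactor M ≤ opNorm (M - P ⊗ₖ (1 : Matrix n₂ n₂ ℂ)) := by
  apply csInf_le
  · exact ⟨0, by rintro x ⟨P', rfl⟩; exact norm_nonneg _⟩
  · exact ⟨P, rfl⟩

private lemma opNorm_nonneg' {n : Type*} [Fintype n] [DecidableEq n] (M : Matrix n n ℂ) :
    0 ≤ opNorm M := norm_nonneg _

private lemma opNorm_mul_le {n : Type*} [Fintype n] [DecidableEq n] (M N : Matrix n n ℂ) :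
    opNorm (M * N) ≤ opNorm M * opNorm N := by
  unfold opNorm; rw [map_mul]; exact norm_mul_le _ _

private lemma opNorm_add_le {n : Type*} [Fintype n] [DecidableEq n] (M N : Matrix n n ℂ) :
    opNorm (M + N) ≤ opNorm M + opNorm N := by
  unfold opNorm; rw [map_add]; exact norm_add_le _ _

private lemma opNorm_one_le {n : Type*} [Fintype n] [DecidableEq n] :
    opNorm (1 : Matrix n n ℂ) ≤ 1 := by
  unfold opNorm; rw [map_one]; exact ContinuousLinearMap.norm_id_le

private lemma opNorm_sub_rev {n : Type*} [Fintype n] [DecidableEq n] (M N : Matrix n n ℂ) :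
    opNorm (M - N) = opNorm (N - M) := by
  unfold opNorm; rw [map_sub, map_sub, norm_sub_rev]

private lemma isUnit_one_sub {n : Type*} [Fintype n] [DecidableEq n] {Y : Matrix n n ℂ}
    (h : opNorm Y < 1) : IsUnit ((1 : Matrix n n ℂ) - Y) := by
  have hu : IsUnit (Matrix.toEuclideanCLM (𝕜 := ℂ) ((1 : Matrix n n ℂ) - Y)) := by
    rw [map_sub, map_one]
    exact (Units.oneSub (Matrix.toEuclideanCLM (𝕜 := ℂ) Y) h).isUnit
  have := hu.map (Matrix.toEuclideanCLM (𝕜 := ℂ) (n := n)).symm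
  simpa using this

private lemma key (Q : Matrix (n₁ × n₂) (n₁ × n₂) ℂ) (hQ : Q.PosDef) (P : Matrix n₁ n₁ ℂ) :
    distFactor Q⁻¹ ≤ 2 * opNorm Q⁻¹ ^ 2 * opNorm (Q - P ⊗ₖ (1 : Matrix n₂ n₂ ℂ)) := by
  set c := opNorm Q⁻¹ with hc
  set ε := opNorm (Q - P ⊗ₖ (1 : Matrix n₂ n₂ ℂ)) with hε
  have hc0 : 0 ≤ c := opNorm_nonneg' _
  have hε0 : 0 ≤ ε := opNorm_nonneg' _
  by_cases hbig : 1 ≤ 2 * c * ε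
  · calc distFactor Q⁻¹ ≤ opNorm (Q⁻¹ - (0 : Matrix n₁ n₁ ℂ) ⊗ₖ (1 : Matrix n₂ n₂ ℂ)) :=
          distFactor_le _ _
      _ = c := by rw [Matrix.zero_kronecker, sub_zero]
      _ ≤ 2 * c ^ 2 * ε := by nlinarith
  push_neg at hbig
  set A := P ⊗ₖ (1 : Matrix n₂ n₂ ℂ) with hA
  set Y := Q⁻¹ * (Q - A) with hY
  have hQdet : IsUnit Q.det := (Matrix.isUnit_iff_isUnit_det Q).mp hQ.isUnit
  have hYle : opNorm Y ≤ c * ε := opNorm_mul_le _ _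
  have hYlt : opNorm Y < 1 := by
    rcases lt_or_ge (c * ε) 1 with h | h
    · linarith
    · nlinarith
  have hY1 : IsUnit ((1 : Matrix (n₁ × n₂) (n₁ × n₂) ℂ) - Y) := isUnit_one_sub hYlt
  have hY1det : IsUnit ((1 : Matrix (n₁ × n₂) (n₁ × n₂) ℂ) - Y).det :=
    (Matrix.isUnit_iff_isUnit_det _).mp hY1
  have hAeq : A = Q * (1 - Y) := by
    have h1 : Q * Q⁻¹ = 1 := Matrix.mul_nonsing_inv Q hQdet
    calc A = Q - (Q - A) := (sub_sub_cancel Q A).symm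
      _ = Q - (Q * Q⁻¹) * (Q - A) := by rw [h1, one_mul]
      _ = Q * (1 - Y) := by rw [hY]; noncomm_ring
  have hAunit : IsUnit A := hAeq ▸ hQ.isUnit.mul hY1
  have hAdet : IsUnit A.det := (Matrix.isUnit_iff_isUnit_det A).mp hAunit
  set B := ((1 : Matrix (n₁ × n₂) (n₁ × n₂) ℂ) - Y)⁻¹ with hB
  have hBid : (1 - Y) * B = 1 := Matrix.mul_nonsing_inv _ hY1det
  have hBeq : B = 1 + Y * B := by
    have h' : B - Y * B = 1 := by
      calc B - Y * B = (1 - Y) * B := by noncomm_ring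
        _ = 1 := hBid
    exact sub_eq_iff_eq_add.mp h'
  have hfB : opNorm B ≤ 2 := by
    have h1 : opNorm B ≤ 1 + opNorm Y * opNorm B := by
      calc opNorm B = opNorm (1 + Y * B) := by rw [← hBeq]
        _ ≤ opNorm (1 : Matrix (n₁ × n₂) (n₁ × n₂) ℂ) + opNorm (Y * B) := opNorm_add_le _ _
        _ ≤ 1 + opNorm Y * opNorm B := by
            gcongr
            · exact opNorm_one_le
            · exact opNorm_mul_le _ _
    have hB0 : (0 : ℝ) ≤ opNorm B := opNorm_nonneg' _
    nlinarith
  have hAinv : A⁻¹ = B * Q⁻¹ := by rw [hAeq, Matrix.mul_inv_rev]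
  have hAinvle : opNorm A⁻¹ ≤ 2 * c := by
    calc opNorm A⁻¹ = opNorm (B * Q⁻¹) := by rw [hAinv]
      _ ≤ opNorm B * c := opNorm_mul_le _ _
      _ ≤ 2 * c := by nlinarith [opNorm_nonneg' B]
  have hid : Q⁻¹ - A⁻¹ = Q⁻¹ * (A - Q) * A⁻¹ := by
    have h1 : Q⁻¹ * Q = 1 := Matrix.nonsing_inv_mul Q hQdet
    have h2 : A * A⁻¹ = 1 := Matrix.mul_nonsing_inv A hAdet
    have h3 : Q⁻¹ * (A - Q) * A⁻¹ = Q⁻¹ * (A * A⁻¹) - (Q⁻¹ * Q) * A⁻¹ := by noncomm_ring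
    rw [h3, h1, h2, mul_one, one_mul]
  have hPinv : P⁻¹ ⊗ₖ (1 : Matrix n₂ n₂ ℂ) = A⁻¹ := by
    rw [hA, Matrix.inv_kronecker, inv_one]
  have hAQ : opNorm (A - Q) = ε := (opNorm_sub_rev A Q).trans hε.symm
  calc distFactor Q⁻¹ ≤ opNorm (Q⁻¹ - P⁻¹ ⊗ₖ (1 : Matrix n₂ n₂ ℂ)) := distFactor_le _ _
    _ = opNorm (Q⁻¹ * (A - Q) * A⁻¹) := by rw [hPinv, hid]
    _ ≤ opNorm (Q⁻¹ * (A - Q)) * opNorm A⁻¹ := opNorm_mul_le _ _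
    _ ≤ (c * ε) * (2 * c) := by
        have := opNorm_mul_le Q⁻¹ (A - Q)
        rw [hAQ] at this
        have h0 : (0 : ℝ) ≤ opNorm (Q⁻¹ * (A - Q)) := opNorm_nonneg' _
        have h0' : (0 : ℝ) ≤ opNorm A⁻¹ := opNorm_nonneg' _
        nlinarith
    _ ≤ 2 * c ^ 2 * ε := by nlinarith

end Aux

/-- If `Q` is positive definite then `‖Q⁻¹‖_* ≤ 2 ‖Q⁻¹‖² ‖Q‖_*`. -/
theorem distFactor_inv_le {n₁ n₂ : Type*} [Fintype n₁] [DecidableEq n₁]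
    [Fintype n₂] [DecidableEq n₂] (Q : Matrix (n₁ × n₂) (n₁ × n₂) ℂ) (hQ : Q.PosDef) :
    distFactor Q⁻¹ ≤ 2 * opNorm Q⁻¹ ^ 2 * distFactor Q := by
  set c := opNorm Q⁻¹ with hc
  have hc0 : 0 ≤ c := opNorm_nonneg' _
  by_cases hzero : c = 0
  · have h1 : distFactor Q⁻¹ ≤ opNorm (Q⁻¹ - (0 : Matrix n₁ n₁ ℂ) ⊗ₖ (1 : Matrix n₂ n₂ ℂ)) :=
      distFactor_le _ _
    rw [Matrix.zero_kronecker, sub_zero] at h1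
    have : distFactor Q⁻¹ ≤ 0 := by rw [← hzero]; exact h1
    calc distFactor Q⁻¹ ≤ 0 := this
      _ ≤ 2 * c ^ 2 * distFactor Q := by rw [hzero]; ring_nf; simp
  · have hcpos : 0 < c := lt_of_le_of_ne hc0 (Ne.symm hzero)
    have hk : 0 < 2 * c ^ 2 := by positivity
    have hlb : distFactor Q⁻¹ / (2 * c ^ 2) ≤ distFactor Q := by
      apply le_csInf
      · exact ⟨opNorm (Q - (0 : Matrix n₁ n₁ ℂ) ⊗ₖ (1 : Matrix n₂ n₂ ℂ)), 0, rfl⟩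
      · rintro x ⟨P, rfl⟩
        rw [div_le_iff₀ hk]
        calc distFactor Q⁻¹ ≤ 2 * c ^ 2 * opNorm (Q - P ⊗ₖ (1 : Matrix n₂ n₂ ℂ)) :=
            key Q hQ P
          _ = opNorm (Q - P ⊗ₖ (1 : Matrix n₂ n₂ ℂ)) * (2 * c ^ 2) := by ring
    calc distFactor Q⁻¹ = distFactor Q⁻¹ / (2 * c ^ 2) * (2 * c ^ 2) := by
          field_simp
      _ ≤ distFactor Q * (2 * c ^ 2) := by gcongr
      _ = 2 * c ^ 2 * distFactor Q := by ring

end QIT
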